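/- Let p, q : (0,1) → ℝ be nonnegative integrable functions such that: p and q are symmetric (p(x) = p(1-x) and q(x) = q(1-x) for all x ∈ (0,1)); p is non-decreasing on (0, 1/2]; q is convex on (0, 1/2]; q(x) → 0 as x → 0⁺ (with q extended by q(0) = 0); and ∫₀¹ q(x) dx = 1. Then for every concave integrable function φ : [0,1] → ℝ with φ(0) + φ(1) ≥ 0, one has ∫₀¹ p(x)φ(x) dx ≤ (∫₀¹ φ(x) dx) · (∫₀¹ p(x)q(x) dx). -/

import Mathlib

open MeasureTheory Set Filter

private lemma clausing_integral_Ioo_eq (f : ℝ → ℝ) {a b : ℝ} (hab : a ≤ b) :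
    ∫ x in Ioo a b, f x = ∫ x in a..b, f x := by
  rw [intervalIntegral.integral_of_le hab, integral_Ioc_eq_integral_Ioo]

private lemma clausing_reflect_integrable {f : ℝ → ℝ} (hf : IntegrableOn f (Ioo 0 1)) :
    IntegrableOn (fun x => f (1 - x)) (Ioo (0:ℝ) 1) := by
  have h1 : IntervalIntegrable f volume 0 1 := by
    rw [intervalIntegrable_iff_integrableOn_Ioc_of_le zero_le_one,
      integrableOn_Ioc_iff_integrableOn_Ioo]
    exact hf
  have h2 := (h1.comp_sub_left 1).symm
  rw [show (1:ℝ) - 1 = 0 by norm_num, show (1:ℝ) - 0 = 1 by norm_num] at h2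
  rw [intervalIntegrable_iff_integrableOn_Ioc_of_le zero_le_one,
    integrableOn_Ioc_iff_integrableOn_Ioo] at h2
  exact h2

private lemma clausing_reflect_integral (f : ℝ → ℝ) :
    ∫ x in Ioo (0:ℝ) 1, f (1 - x) = ∫ x in Ioo (0:ℝ) 1, f x := by
  rw [clausing_integral_Ioo_eq _ zero_le_one, clausing_integral_Ioo_eq f zero_le_one,
    intervalIntegral.integral_comp_sub_left f 1]
  norm_num

private lemma clausing_half_integral {f : ℝ → ℝ} (hf : IntegrableOn f (Ioo 0 1))
    (hsymm : ∀ x ∈ Ioo (0:ℝ) 1, f x = f (1 - x)) :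
    ∫ x in Ioo (0:ℝ) 1, f x = 2 * ∫ x in Ioo (0:ℝ) (1/2), f x := by
  have hsub1 : Ioc (0:ℝ) (1/2) ⊆ Ioo 0 1 := fun x hx => ⟨hx.1, lt_of_le_of_lt hx.2 (by norm_num)⟩
  have hsub2 : Ioo (1/2:ℝ) 1 ⊆ Ioo 0 1 := fun x hx => ⟨lt_trans (by norm_num) hx.1, hx.2⟩
  have hdisj : Disjoint (Ioc (0:ℝ) (1/2)) (Ioo (1/2:ℝ) 1) := by
    rw [Set.disjoint_left]; intro x hx hx'; exact absurd hx.2 (not_le.mpr hx'.1)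
  have hunion : Ioc (0:ℝ) (1/2) ∪ Ioo (1/2:ℝ) 1 = Ioo (0:ℝ) 1 :=
    Ioc_union_Ioo_eq_Ioo (by norm_num) (by norm_num)
  have hsplit : ∫ x in Ioo (0:ℝ) 1, f x
      = (∫ x in Ioc (0:ℝ) (1/2), f x) + ∫ x in Ioo (1/2:ℝ) 1, f x := by
    rw [← hunion]
    exact setIntegral_union hdisj measurableSet_Ioo (hf.mono_set hsub1) (hf.mono_set hsub2)
  have e1 : ∫ x in (0:ℝ)..(1/2), f (1 - x) = ∫ x in (1/2:ℝ)..1, f x := by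
    rw [intervalIntegral.integral_comp_sub_left f 1]
    norm_num
  have href : ∫ x in Ioo (1/2:ℝ) 1, f x = ∫ x in Ioo (0:ℝ) (1/2), f x := by
    rw [clausing_integral_Ioo_eq f (by norm_num : (1/2:ℝ) ≤ 1), ← e1,
      ← clausing_integral_Ioo_eq (fun x => f (1 - x)) (by norm_num : (0:ℝ) ≤ 1/2)]
    refine setIntegral_congr_fun measurableSet_Ioo (fun x hx => ?_)
    have hx' : x ∈ Ioo (0:ℝ) 1 := ⟨hx.1, by have := hx.2; linarith⟩
    exact (hsymm x hx').symm
  rw [hsplit, href, integral_Ioc_eq_integral_Ioo]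
  ring

/-- **Generalized Clausing inequality.** Let `p, q` be nonnegative integrable functions on
`(0,1)`, both symmetric, with `p` non-decreasing on `(0, 1/2]`, `q` convex on `(0, 1/2]`,
`q(x) → 0` as `x → 0⁺`, `q(0) = 0`, and `∫₀¹ q = 1`. Then for every concave integrable
`φ : [0,1] → ℝ` with `φ(0) + φ(1) ≥ 0` (products assumed integrable),
`∫₀¹ p φ ≤ (∫₀¹ φ) (∫₀¹ p q)`. -/
theorem generalized_clausing (p q φ : ℝ → ℝ)
    (hp_nonneg : ∀ x ∈ Ioo (0:ℝ) 1, 0 ≤ p x)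
    (hq_nonneg : ∀ x ∈ Ioo (0:ℝ) 1, 0 ≤ q x)
    (hp_int : IntegrableOn p (Ioo 0 1))
    (hq_int : IntegrableOn q (Ioo 0 1))
    (hp_symm : ∀ x ∈ Ioo (0:ℝ) 1, p x = p (1 - x))
    (hq_symm : ∀ x ∈ Ioo (0:ℝ) 1, q x = q (1 - x))
    (hp_mono : MonotoneOn p (Ioc 0 (1/2)))
    (hq_conv : ConvexOn ℝ (Ioc 0 (1/2)) q)
    (hq_lim : Tendsto q (nhdsWithin 0 (Ioi 0)) (nhds 0))
    (hq_zero : q 0 = 0)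
    (hq_one : ∫ x in Ioo (0:ℝ) 1, q x = 1)
    (hφ_conc : ConcaveOn ℝ (Icc 0 1) φ)
    (hφ_int : IntegrableOn φ (Ioo 0 1))
    (hφ_ends : 0 ≤ φ 0 + φ 1)
    (hpφ_int : IntegrableOn (fun x => p x * φ x) (Ioo 0 1))
    (hpq_int : IntegrableOn (fun x => p x * q x) (Ioo 0 1)) :
    ∫ x in Ioo (0:ℝ) 1, p x * φ x ≤
      (∫ x in Ioo (0:ℝ) 1, φ x) * ∫ x in Ioo (0:ℝ) 1, p x * q x := by
  -- the symmetrized concave function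
  set ψ : ℝ → ℝ := fun x => (φ x + φ (1 - x)) / 2 with hψ_def
  set c : ℝ := ∫ x in Ioo (0:ℝ) 1, φ x with hc_def
  set h : ℝ → ℝ := fun x => ψ x - c * q x with hh_def
  -- basic facts about ψ
  have hψ_symm : ∀ x : ℝ, ψ (1 - x) = ψ x := by
    intro x; simp only [hψ_def, sub_sub_cancel]; ring
  have hψ_conc : ConcaveOn ℝ (Icc 0 1) ψ := by
    constructor
    · exact convex_Icc 0 1
    · intro x hx y hy a b ha hb hab
      have hx' : (1:ℝ) - x ∈ Icc (0:ℝ) 1 := ⟨by linarith [hx.2], by linarith [hx.1]⟩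
      have hy' : (1:ℝ) - y ∈ Icc (0:ℝ) 1 := ⟨by linarith [hy.2], by linarith [hy.1]⟩
      have h1 := hφ_conc.2 hx hy ha hb hab
      have h2 := hφ_conc.2 hx' hy' ha hb hab
      have he : a • ((1:ℝ) - x) + b • (1 - y) = 1 - (a • x + b • y) := by
        simp only [smul_eq_mul]; nlinarith
      rw [he] at h2
      simp only [smul_eq_mul, hψ_def] at *
      linarith
  have hψ_nonneg : ∀ x ∈ Icc (0:ℝ) 1, 0 ≤ ψ x := by
    intro x hx
    have h0 : (0:ℝ) ∈ Icc (0:ℝ) 1 := ⟨le_rfl, zero_le_one⟩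
    have h1 : (1:ℝ) ∈ Icc (0:ℝ) 1 := ⟨zero_le_one, le_rfl⟩
    have := hψ_conc.2 h0 h1 (by linarith [hx.2] : (0:ℝ) ≤ 1 - x) hx.1 (by ring)
    simp only [smul_eq_mul, mul_zero, mul_one, zero_add] at this
    have hψ0 : ψ 0 = (φ 0 + φ 1) / 2 := by simp [hψ_def]
    have hψ1 : ψ 1 = (φ 1 + φ 0) / 2 := by simp [hψ_def]
    rw [hψ0, hψ1] at this
    nlinarith [hx.1, hx.2]
  -- integrability
  have hφr_int : IntegrableOn (fun x => φ (1 - x)) (Ioo (0:ℝ) 1) :=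
    clausing_reflect_integrable hφ_int
  have hψ_int : IntegrableOn ψ (Ioo (0:ℝ) 1) := ((hφ_int.add hφr_int).div_const 2)
  have hh_int : IntegrableOn h (Ioo (0:ℝ) 1) := hψ_int.sub (hq_int.const_mul c)
  have hpφr_int : IntegrableOn (fun x => p x * φ (1 - x)) (Ioo (0:ℝ) 1) := by
    refine IntegrableOn.congr_fun (clausing_reflect_integrable hpφ_int)
      (fun x hx => ?_) measurableSet_Ioo
    show p (1 - x) * φ (1 - x) = p x * φ (1 - x)
    rw [← hp_symm x hx]
  have hpψ_int : IntegrableOn (fun x => p x * ψ x) (Ioo (0:ℝ) 1) := by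
    refine IntegrableOn.congr_fun ((hpφ_int.add hpφr_int).div_const 2)
      (fun x hx => ?_) measurableSet_Ioo
    show (p x * φ x + p x * φ (1 - x)) / 2 = p x * ψ x
    simp only [hψ_def]
    ring
  have hph_int : IntegrableOn (fun x => p x * h x) (Ioo (0:ℝ) 1) := by
    refine IntegrableOn.congr_fun (hpψ_int.sub (hpq_int.const_mul c))
      (fun x hx => ?_) measurableSet_Ioo
    show p x * ψ x - c * (p x * q x) = p x * h x
    simp only [hh_def]
    ring
  -- integral identities
  have hψ_integral : ∫ x in Ioo (0:ℝ) 1, ψ x = c := by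
    have h1 : ∫ x in Ioo (0:ℝ) 1, ψ x = ∫ x in Ioo (0:ℝ) 1, (φ x + φ (1 - x)) / 2 := rfl
    rw [h1, integral_div, integral_add hφ_int hφr_int, clausing_reflect_integral φ, ← hc_def]
    ring
  have hc_nonneg : 0 ≤ c := by
    rw [← hψ_integral]
    refine setIntegral_nonneg measurableSet_Ioo (fun x hx => ?_)
    exact hψ_nonneg x ⟨le_of_lt hx.1, le_of_lt hx.2⟩
  have hpψ_integral : ∫ x in Ioo (0:ℝ) 1, p x * ψ x = ∫ x in Ioo (0:ℝ) 1, p x * φ x := by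
    have h1 : ∫ x in Ioo (0:ℝ) 1, p x * ψ x
        = ((∫ x in Ioo (0:ℝ) 1, p x * φ x) + ∫ x in Ioo (0:ℝ) 1, p x * φ (1 - x)) / 2 := by
      have h0 : ∫ x in Ioo (0:ℝ) 1, p x * ψ x
          = ∫ x in Ioo (0:ℝ) 1, (p x * φ x + p x * φ (1 - x)) / 2 := by
        refine setIntegral_congr_fun measurableSet_Ioo (fun x hx => ?_)
        simp only [hψ_def]; ring
      rw [h0, integral_div, integral_add hpφ_int hpφr_int]
    have h2 : ∫ x in Ioo (0:ℝ) 1, p x * φ (1 - x) = ∫ x in Ioo (0:ℝ) 1, p x * φ x := by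
      have h3 : ∫ x in Ioo (0:ℝ) 1, p x * φ (1 - x)
          = ∫ x in Ioo (0:ℝ) 1, p (1 - x) * φ (1 - x) := by
        refine setIntegral_congr_fun measurableSet_Ioo (fun x hx => ?_)
        rw [← hp_symm x hx]
      rw [h3, clausing_reflect_integral (fun y => p y * φ y)]
    rw [h1, h2]; ring
  -- symmetry of h and p*h, p*q
  have hh_symm : ∀ x ∈ Ioo (0:ℝ) 1, h x = h (1 - x) := by
    intro x hx
    simp only [hh_def]
    rw [hψ_symm x, ← hq_symm x hx]
  have hpq_symm : ∀ x ∈ Ioo (0:ℝ) 1, p x * q x = p (1 - x) * q (1 - x) := by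
    intro x hx; rw [← hp_symm x hx, ← hq_symm x hx]
  have hph_symm : ∀ x ∈ Ioo (0:ℝ) 1, p x * h x = p (1 - x) * h (1 - x) := by
    intro x hx
    have hx' : (1:ℝ) - x ∈ Ioo (0:ℝ) 1 := ⟨by linarith [hx.2], by linarith [hx.1]⟩
    rw [← hp_symm x hx, ← hh_symm x hx]
  -- half-interval facts
  have hsubhalf : Ioo (0:ℝ) (1/2) ⊆ Ioo (0:ℝ) 1 :=
    Ioo_subset_Ioo_right (by norm_num)
  have hh_half : ∫ x in Ioo (0:ℝ) (1/2), h x = 0 := by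
    have h1 : ∫ x in Ioo (0:ℝ) 1, h x = 0 := by
      have : ∫ x in Ioo (0:ℝ) 1, h x
          = (∫ x in Ioo (0:ℝ) 1, ψ x) - ∫ x in Ioo (0:ℝ) 1, c * q x := by
        exact integral_sub hψ_int (hq_int.const_mul c)
      rw [this, hψ_integral, integral_const_mul, hq_one]; ring
    have h2 := clausing_half_integral hh_int hh_symm
    rw [h1] at h2
    linarith
  -- concavity of h on (0, 1/2]
  have hh_conc : ConcaveOn ℝ (Ioc (0:ℝ) (1/2)) h := by
    have hψc : ConcaveOn ℝ (Ioc (0:ℝ) (1/2)) ψ :=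
      hψ_conc.subset (fun x hx => ⟨le_of_lt hx.1, le_trans hx.2 (by norm_num)⟩) (convex_Ioc 0 (1/2))
    have hqc : ConvexOn ℝ (Ioc (0:ℝ) (1/2)) (fun x => c * q x) := by
      have hcv := hq_conv.smul hc_nonneg
      convert hcv using 1
      all_goals rfl
    have := hψc.sub hqc
    convert this using 1
    all_goals rfl
  -- downward closure of {h ≥ 0}
  have hdc : ∀ x y : ℝ, 0 < x → x < y → y ≤ 1/2 → 0 ≤ h y → 0 ≤ h x := by
    intro x y hx hxy hy12 hhy
    have key : ∀ ε ∈ Ioo (0:ℝ) x, -(c * q ε) ≤ h x := by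
      intro ε hε
      obtain ⟨hε1, hε2⟩ := hε
      have hεy : ε < y := lt_trans hε2 hxy
      have hyε : (0:ℝ) < y - ε := by linarith
      set t : ℝ := (y - x) / (y - ε) with ht_def
      have ht0 : 0 ≤ t := div_nonneg (by linarith) (by linarith)
      have ht1 : t ≤ 1 := by rw [div_le_one hyε]; linarith
      have hmemε : ε ∈ Ioc (0:ℝ) (1/2) := ⟨hε1, by linarith [hε2]⟩
      have hmemy : y ∈ Ioc (0:ℝ) (1/2) := ⟨by linarith, hy12⟩
      have hcomb : t * ε + (1 - t) * y = x := by
        have hty : t * (y - ε) = y - x := div_mul_cancel₀ _ hyε.ne'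
        linarith
      have hconc := hh_conc.2 hmemε hmemy ht0 (by linarith : (0:ℝ) ≤ 1 - t) (by ring)
      simp only [smul_eq_mul] at hconc
      rw [hcomb] at hconc
      -- bound h ε from below
      have hεI : ε ∈ Ioo (0:ℝ) 1 := ⟨hε1, by linarith [hε2]⟩
      have hψε : 0 ≤ ψ ε := hψ_nonneg ε ⟨le_of_lt hεI.1, le_of_lt hεI.2⟩
      have hqε : 0 ≤ q ε := hq_nonneg ε hεI
      have hhε : -(c * q ε) ≤ h ε := by simp only [hh_def]; linarith
      have hcqε : 0 ≤ c * q ε := mul_nonneg hc_nonneg hqε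
      nlinarith [mul_le_mul_of_nonneg_left hhε ht0, mul_nonneg (by linarith : (0:ℝ) ≤ 1 - t) hhy]
    have hlim : Tendsto (fun ε => -(c * q ε)) (nhdsWithin 0 (Ioi 0)) (nhds 0) := by
      have := (hq_lim.const_mul c).neg
      simpa using this
    exact le_of_tendsto hlim (Filter.eventually_of_mem (Ioo_mem_nhdsGT hx) key)
  -- the crossing point
  set S : Set ℝ := {x | x ∈ Ioc (0:ℝ) (1/2) ∧ 0 ≤ h x} with hS_def
  set x₀ : ℝ := sSup (insert 0 S) with hx₀_def
  have hbdd : BddAbove (insert (0:ℝ) S) := by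
    refine ⟨1/2, fun z hz => ?_⟩
    rcases hz with rfl | hz
    · norm_num
    · exact hz.1.2
  have hne : (insert (0:ℝ) S).Nonempty := ⟨0, mem_insert 0 S⟩
  have hx₀_le : x₀ ≤ 1/2 := csSup_le hne (fun z hz => by
    rcases hz with rfl | hz
    · norm_num
    · exact hz.1.2)
  have hx₀_nonneg : 0 ≤ x₀ := le_csSup hbdd (mem_insert 0 S)
  have hlt : ∀ x ∈ Ioo (0:ℝ) (1/2), x < x₀ → 0 ≤ h x := by
    intro x hx hxlt
    obtain ⟨y, hy, hxy⟩ := exists_lt_of_lt_csSup hne hxlt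
    rcases hy with rfl | hy
    · linarith [hx.1]
    · exact hdc x y hx.1 hxy hy.1.2 hy.2
  have hgt : ∀ x ∈ Ioo (0:ℝ) (1/2), x₀ < x → h x ≤ 0 := by
    intro x hx hxgt
    by_contra hcon
    push_neg at hcon
    have hxS : x ∈ S := ⟨⟨hx.1, le_of_lt hx.2⟩, le_of_lt hcon⟩
    have : x ≤ x₀ := le_csSup hbdd (mem_insert_of_mem 0 hxS)
    linarith
  -- main estimate on the half interval
  have hmain : ∫ x in Ioo (0:ℝ) (1/2), p x * h x ≤ 0 := by
    rcases eq_or_lt_of_le hx₀_nonneg with hx₀0 | hx₀pos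
    · -- x₀ = 0 : h ≤ 0 everywhere on (0, 1/2)
      refine setIntegral_nonpos measurableSet_Ioo (fun x hx => ?_)
      have hh0 : h x ≤ 0 := hgt x hx (by rw [← hx₀0]; exact hx.1)
      exact mul_nonpos_of_nonneg_of_nonpos (hp_nonneg x (hsubhalf hx)) hh0
    · -- x₀ > 0 : compare with p x₀
      set k : ℝ := p x₀ with hk_def
      have hx₀mem : x₀ ∈ Ioc (0:ℝ) (1/2) := ⟨hx₀pos, hx₀_le⟩
      have hkey : ∀ x ∈ Ioo (0:ℝ) (1/2), (p x - k) * h x ≤ 0 := by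
        intro x hx
        rcases lt_trichotomy x x₀ with hlt' | heq | hgt'
        · have h1 : 0 ≤ h x := hlt x hx hlt'
          have h2 : p x ≤ k :=
            hp_mono ⟨hx.1, le_of_lt hx.2⟩ hx₀mem (le_of_lt hlt')
          exact mul_nonpos_of_nonpos_of_nonneg (by linarith) h1
        · rw [heq]; simp [hk_def]
        · have h1 : h x ≤ 0 := hgt x hx hgt'
          have h2 : k ≤ p x :=
            hp_mono hx₀mem ⟨hx.1, le_of_lt hx.2⟩ (le_of_lt hgt')
          exact mul_nonpos_of_nonneg_of_nonpos (by linarith) h1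
      have hph_half_int : IntegrableOn (fun x => p x * h x) (Ioo (0:ℝ) (1/2)) :=
        hph_int.mono_set hsubhalf
      have hh_half_int : IntegrableOn h (Ioo (0:ℝ) (1/2)) := hh_int.mono_set hsubhalf
      have hint : ∫ x in Ioo (0:ℝ) (1/2), (p x - k) * h x
          = (∫ x in Ioo (0:ℝ) (1/2), p x * h x) - k * ∫ x in Ioo (0:ℝ) (1/2), h x := by
        rw [← integral_const_mul, ← integral_sub hph_half_int (hh_half_int.const_mul k)]
        refine setIntegral_congr_fun measurableSet_Ioo (fun x hx => ?_)
        ring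
      have hnonpos : ∫ x in Ioo (0:ℝ) (1/2), (p x - k) * h x ≤ 0 :=
        setIntegral_nonpos measurableSet_Ioo hkey
      rw [hint, hh_half] at hnonpos
      linarith
  -- assemble
  have hpq_half : ∫ x in Ioo (0:ℝ) 1, p x * q x
      = 2 * ∫ x in Ioo (0:ℝ) (1/2), p x * q x :=
    clausing_half_integral hpq_int hpq_symm
  have hpψ_half : ∫ x in Ioo (0:ℝ) 1, p x * ψ x
      = 2 * ∫ x in Ioo (0:ℝ) (1/2), p x * ψ x := by
    apply clausing_half_integral hpψ_int
    intro x hx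
    rw [← hp_symm x hx, hψ_symm x]
  have hdecomp : ∫ x in Ioo (0:ℝ) (1/2), p x * ψ x
      = (∫ x in Ioo (0:ℝ) (1/2), p x * h x) + c * ∫ x in Ioo (0:ℝ) (1/2), p x * q x := by
    rw [← integral_const_mul, ← integral_add (hph_int.mono_set hsubhalf)
      ((hpq_int.mono_set hsubhalf).const_mul c)]
    refine setIntegral_congr_fun measurableSet_Ioo (fun x hx => ?_)
    simp only [hh_def]
    ring
  calc ∫ x in Ioo (0:ℝ) 1, p x * φ x
      = ∫ x in Ioo (0:ℝ) 1, p x * ψ x := hpψ_integral.symm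
    _ = 2 * ∫ x in Ioo (0:ℝ) (1/2), p x * ψ x := hpψ_half
    _ = 2 * ((∫ x in Ioo (0:ℝ) (1/2), p x * h x) + c * ∫ x in Ioo (0:ℝ) (1/2), p x * q x) := by
        rw [hdecomp]
    _ ≤ 2 * (0 + c * ∫ x in Ioo (0:ℝ) (1/2), p x * q x) := by
        have := hmain
        nlinarith
    _ = c * (2 * ∫ x in Ioo (0:ℝ) (1/2), p x * q x) := by ring
    _ = c * ∫ x in Ioo (0:ℝ) 1, p x * q x := by rw [← hpq_half]
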